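/- Let n ≥ 3, c > 0, and let ε > 0 satisfy ε < min{((n−2)/n)(2/(nc))^{2/(n−2)}, (1/(nc))^{2/(n−2)}(n/(n−1))^{n/(n−2)}, (1/(c(n−1)))^{2/(n−2)}((n−1)/n)^{n/(n−2)}}. Let R_G(w) = c w^{n−1} + ε/w. Then at each solution w' of c wⁿ − |w|² + ε = 0 one has |R_G'(w')| = |(n−1) − nε/|w'|²|. In particular, at the solutions w' = ρ₁ e^{i(2k+1)π/n} one has |R_G'(w')| > 1, and at the solutions w' = ρ₂ e^{i2kπ/n} one has |R_G'(w')| < 1. -/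

import Mathlib

lemma rho2_sq_lt (n : ℕ) (hn : 3 ≤ n) (c ε : ℝ) (hc : 0 < c) (hε : 0 < ε)
    (hbound : ε < (1 / (c * ((n : ℝ) - 1))) ^ ((2 : ℝ) / ((n : ℝ) - 2)) *
      (((n : ℝ) - 1) / n) ^ ((n : ℝ) / ((n : ℝ) - 2)))
    (ρ₂ : ℝ) (hρ₂pos : 0 < ρ₂) (hρ₂ : c * ρ₂ ^ n - ρ₂ ^ 2 + ε = 0)
    (hmin : ∀ ρ : ℝ, 0 < ρ → c * ρ ^ n - ρ ^ 2 + ε = 0 → ρ₂ ≤ ρ) :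
    ρ₂ ^ 2 < (n : ℝ) * ε / ((n : ℝ) - 1) := by
  have hN : (3 : ℝ) ≤ (n : ℝ) := by exact_mod_cast hn
  have hN1 : (0:ℝ) < (n:ℝ) - 1 := by linarith
  have hn2 : (0:ℝ) < (n : ℝ) - 2 := by linarith
  set A : ℝ := 1 / (c * ((n : ℝ) - 1)) with hA
  set B : ℝ := ((n : ℝ) - 1) / n with hB
  have hApos : 0 < A := one_div_pos.mpr (mul_pos hc hN1)
  have hBpos : 0 < B := div_pos hN1 (by linarith)
  -- raise ε < A^{2/(n-2)} B^{n/(n-2)} to power (n-2)/2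
  have key : ε ^ (((n:ℝ) - 2) / 2) < A * B ^ ((n:ℝ) / 2) := by
    have h1 := Real.rpow_lt_rpow hε.le hbound (by positivity : (0:ℝ) < ((n:ℝ)-2)/2)
    calc ε ^ (((n:ℝ) - 2) / 2) < (A ^ ((2 : ℝ) / ((n : ℝ) - 2)) *
          B ^ ((n : ℝ) / ((n : ℝ) - 2))) ^ (((n:ℝ)-2)/2) := h1
      _ = A * B ^ ((n:ℝ) / 2) := by
          rw [Real.mul_rpow (by positivity) (by positivity),
            ← Real.rpow_mul hApos.le, ← Real.rpow_mul hBpos.le,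
            show (2 : ℝ) / ((n : ℝ) - 2) * (((n:ℝ)-2)/2) = 1 by field_simp,
            show (n : ℝ) / ((n : ℝ) - 2) * (((n:ℝ)-2)/2) = (n:ℝ)/2 by field_simp,
            Real.rpow_one]
  set t : ℝ := (n : ℝ) * ε / ((n : ℝ) - 1) with ht
  have htpos : 0 < t := div_pos (by positivity) hN1
  set ρ : ℝ := Real.sqrt t with hρ
  have hρpos : 0 < ρ := Real.sqrt_pos.mpr htpos
  have hρn : ρ ^ n = t ^ ((n : ℝ) / 2) := by
    rw [← Real.rpow_natCast ρ, hρ, Real.sqrt_eq_rpow, ← Real.rpow_mul htpos.le]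
    congr 1; ring
  have htB : t = ε / B := by
    rw [ht, hB]; field_simp
  -- f(ρ) < 0
  have hfneg : c * ρ ^ n - ρ ^ 2 + ε < 0 := by
    have hρ2 : ρ ^ 2 = t := Real.sq_sqrt htpos.le
    have htn : t ^ ((n:ℝ)/2) = ε ^ ((n:ℝ)/2) / B ^ ((n:ℝ)/2) := by
      rw [htB, Real.div_rpow hε.le hBpos.le]
    have hεn : ε ^ ((n:ℝ)/2) = ε ^ (((n:ℝ)-2)/2) * ε := by
      rw [show (n:ℝ)/2 = ((n:ℝ)-2)/2 + 1 by ring, Real.rpow_add hε, Real.rpow_one]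
    have hBn : 0 < B ^ ((n:ℝ)/2) := Real.rpow_pos_of_pos hBpos _
    have hcρ : c * ρ ^ n < ε / ((n:ℝ) - 1) := by
      rw [hρn, htn, hεn]
      have h2 : ε ^ (((n:ℝ)-2)/2) * ε < A * B ^ ((n:ℝ)/2) * ε :=
        mul_lt_mul_of_pos_right key hε
      calc c * (ε ^ (((n:ℝ)-2)/2) * ε / B ^ ((n:ℝ)/2))
          < c * (A * B ^ ((n:ℝ)/2) * ε / B ^ ((n:ℝ)/2)) := by
            apply mul_lt_mul_of_pos_left _ hc
            exact (div_lt_div_iff_of_pos_right hBn).mpr h2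
          _ = ε / ((n:ℝ) - 1) := by
            rw [hA]; field_simp
    have heq : (n:ℝ) * ε / ((n:ℝ) - 1) = ε / ((n:ℝ) - 1) + ε := by
      field_simp; ring
    rw [hρ2, ht]
    linarith
  -- IVT between 0 and ρ
  have hcont : ContinuousOn (fun x : ℝ => c * x ^ n - x ^ 2 + ε) (Set.Icc 0 ρ) := by
    fun_prop
  have hiv := intermediate_value_Icc' (le_of_lt hρpos) hcont
  have h0mem : (0:ℝ) ∈ Set.Icc (c * ρ ^ n - ρ ^ 2 + ε) (c * 0 ^ n - 0 ^ 2 + ε) := by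
    constructor
    · exact hfneg.le
    · simp [zero_pow (show n ≠ 0 by omega)]
      linarith
  obtain ⟨x, hxmem, hx⟩ := hiv h0mem
  simp only at hx
  have hxpos : 0 < x := by
    rcases lt_or_eq_of_le hxmem.1 with h | h
    · exact h
    · exfalso
      rw [← h] at hx
      rw [zero_pow (show n ≠ 0 by omega)] at hx
      norm_num at hx
      linarith
  have hxlt : x < ρ := by
    rcases lt_or_eq_of_le hxmem.2 with h | h
    · exact h
    · exfalso; rw [h] at hx; linarith
  have : ρ₂ ≤ x := hmin x hxpos hx
  have hρ₂lt : ρ₂ < ρ := lt_of_le_of_lt this hxlt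
  calc ρ₂ ^ 2 < ρ ^ 2 := by nlinarith
    _ = t := Real.sq_sqrt htpos.le


/-- Sense of the zeros of `G(w) = c w^{n-1} + ε/w − conj w`: at every solution `w'` of
`c wⁿ − |w|² + ε = 0` the derivative of the analytic part `R_G(w) = c w^{n-1} + ε/w`
satisfies `|R_G'(w')| = |(n−1) − nε/|w'|²|`; at the solutions of modulus `ρ₁`
(the positive root of `cρⁿ + ρ² − ε`) it is `> 1` (sense-preserving), and at the solutions
of modulus `ρ₂` (the smaller positive root of `cρⁿ − ρ² + ε`) it is `< 1`
(sense-reversing). -/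
theorem sense_of_zeros_G (n : ℕ) (hn : 3 ≤ n) (c ε : ℝ) (hc : 0 < c) (hε : 0 < ε)
    (hεb : ε < min (((n : ℝ) - 2) / n * (2 / (n * c)) ^ ((2 : ℝ) / ((n : ℝ) - 2)))
      (min ((1 / (n * c)) ^ ((2 : ℝ) / ((n : ℝ) - 2)) *
          ((n : ℝ) / ((n : ℝ) - 1)) ^ ((n : ℝ) / ((n : ℝ) - 2)))
        ((1 / (c * ((n : ℝ) - 1))) ^ ((2 : ℝ) / ((n : ℝ) - 2)) *
          (((n : ℝ) - 1) / n) ^ ((n : ℝ) / ((n : ℝ) - 2)))))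
    (ρ₁ ρ₂ : ℝ) (hρ₁pos : 0 < ρ₁) (hρ₁ : c * ρ₁ ^ n + ρ₁ ^ 2 - ε = 0)
    (hρ₂pos : 0 < ρ₂) (hρ₂ : c * ρ₂ ^ n - ρ₂ ^ 2 + ε = 0)
    (hρ₂min : ∀ ρ : ℝ, 0 < ρ → c * ρ ^ n - ρ ^ 2 + ε = 0 → ρ₂ ≤ ρ) :
    ∀ w : ℂ, w ≠ 0 → (c : ℂ) * w ^ n - (‖w‖ : ℂ) ^ 2 + (ε : ℂ) = 0 →
      ‖((n : ℂ) - 1) * c * w ^ (n - 2) - (ε : ℂ) / w ^ 2‖ =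
        |((n : ℝ) - 1) - n * ε / (‖w‖) ^ 2| ∧
      (‖w‖ = ρ₁ →
        1 < ‖((n : ℂ) - 1) * c * w ^ (n - 2) - (ε : ℂ) / w ^ 2‖) ∧
      (‖w‖ = ρ₂ →
        ‖((n : ℂ) - 1) * c * w ^ (n - 2) - (ε : ℂ) / w ^ 2‖ < 1) := by
  have hN : (3 : ℝ) ≤ (n : ℝ) := by exact_mod_cast hn
  have hN1 : (0:ℝ) < (n:ℝ) - 1 := by linarith
  intro w hw hsol
  set r : ℝ := ‖w‖ with hr
  have hrpos : 0 < r := norm_pos_iff.mpr hw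
  have hw2 : w ^ 2 ≠ 0 := pow_ne_zero _ hw
  set K : ℝ := ((n:ℝ) - 1) * (r ^ 2 - ε) - ε with hK
  have hcwn : (c : ℂ) * w ^ n = ((r ^ 2 - ε : ℝ) : ℂ) := by
    push_cast
    linear_combination hsol
  have hpow : w ^ (n - 2) * w ^ 2 = w ^ n := by
    rw [← pow_add]; congr 1; omega
  have hDw2 : (((n : ℂ) - 1) * c * w ^ (n - 2) - (ε : ℂ) / w ^ 2) * w ^ 2
      = ((K : ℝ) : ℂ) := by
    have : (((n : ℂ) - 1) * c * w ^ (n - 2) - (ε : ℂ) / w ^ 2) * w ^ 2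
        = ((n : ℂ) - 1) * ((c : ℂ) * w ^ n) - (ε : ℂ) := by
      field_simp
      linear_combination (((n : ℂ) - 1) * c) * hpow
    rw [this, hcwn, hK]
    push_cast
    ring
  have habs : ‖((n : ℂ) - 1) * c * w ^ (n - 2) - (ε : ℂ) / w ^ 2‖
      = |K| / r ^ 2 := by
    have h1 := congrArg (‖·‖) hDw2
    rw [norm_mul, norm_pow, Complex.norm_real, Real.norm_eq_abs, ← hr] at h1
    rw [eq_div_iff (by positivity)]
    exact h1
  have hRHS : |((n : ℝ) - 1) - n * ε / r ^ 2| = |K| / r ^ 2 := by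
    have h2 : ((n : ℝ) - 1) - n * ε / r ^ 2 = K / r ^ 2 := by
      rw [hK]; field_simp; ring
    rw [h2, abs_div, abs_of_pos (by positivity : (0:ℝ) < r ^ 2)]
  refine ⟨by rw [habs, hRHS], ?_, ?_⟩
  · -- r = ρ₁ case
    intro h1
    have hρ₁sq : ρ₁ ^ 2 < ε := by
      have : 0 < c * ρ₁ ^ n := by positivity
      nlinarith
    rw [habs, h1, lt_div_iff₀ (by positivity : (0:ℝ) < ρ₁ ^ 2), one_mul]
    have hKneg : -K ≤ |K| := neg_le_abs K
    have hKval : -K = (n:ℝ) * ε - ((n:ℝ) - 1) * ρ₁ ^ 2 := by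
      rw [hK, h1]; ring
    nlinarith
  · -- r = ρ₂ case
    intro h2
    have hρ₂sq : ε < ρ₂ ^ 2 := by
      have : 0 < c * ρ₂ ^ n := by positivity
      nlinarith
    have hbound3 : ε < (1 / (c * ((n : ℝ) - 1))) ^ ((2 : ℝ) / ((n : ℝ) - 2)) *
        (((n : ℝ) - 1) / n) ^ ((n : ℝ) / ((n : ℝ) - 2)) :=
      lt_of_lt_of_le hεb (le_trans (min_le_right _ _) (min_le_right _ _))
    have hρ₂lt := rho2_sq_lt n hn c ε hc hε hbound3 ρ₂ hρ₂pos hρ₂ hρ₂min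
    have hmul : ρ₂ ^ 2 * ((n:ℝ) - 1) < (n:ℝ) * ε := (lt_div_iff₀ hN1).mp hρ₂lt
    rw [habs, h2, div_lt_iff₀ (by positivity : (0:ℝ) < ρ₂ ^ 2), one_mul]
    rw [abs_lt]
    subst h2
    constructor
    · rw [hK]; nlinarith
    · rw [hK]; nlinarith
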